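/- arXiv:2103.17166 — 2 statements merged into one kernel-verified Lean document; each statement's English description precedes it below -/
import Mathlib

section
/- An ideal I on ω is a hereditary weak P-ideal if and only if it is hereditarily unboring, i.e., for no B ∉ I does the restriction I|B contain an isomorphic copy of BI. -/
open Set

/-- The ideal `Fin ⊗ Fin` on `ω²`: sets all but finitely many of whose
vertical sections are finite. -/
def FinFin : Set (Set (ℕ × ℕ)) :=
  {A | {n : ℕ | ¬ ({m : ℕ | (n, m) ∈ A}).Finite}.Finite}

/-- The `i`-th section of a subset of `ω³`. -/
def BIsec (i : ℕ) (A : Set (ℕ × ℕ × ℕ)) : Set (ℕ × ℕ) := {p | (i, p) ∈ A}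

/-- The ideal `BI` on `ω³`. -/
def BI : Set (Set (ℕ × ℕ × ℕ)) :=
  {A | ∃ k : ℕ, (∀ i < k, BIsec i A ∈ FinFin) ∧ ∀ i ≥ k, (BIsec i A).Finite}

/-- `I` is an ideal on `X`: contains all finite sets, closed under subsets and
finite unions, and proper. -/
def IsIdeal {X : Type*} (I : Set (Set X)) : Prop :=
  (∀ A : Set X, A.Finite → A ∈ I) ∧
  (∀ A B : Set X, A ∈ I → B ⊆ A → B ∈ I) ∧
  (∀ A B : Set X, A ∈ I → B ∈ I → A ∪ B ∈ I) ∧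
  (Set.univ : Set X) ∉ I

/-- `I|B` contains an isomorphic copy of `Fin ⊗ Fin`. -/
def FinFinCopyOn (I : Set (Set ℕ)) (B : Set ℕ) : Prop :=
  ∃ g : ℕ → ℕ × ℕ, Set.BijOn g B Set.univ ∧ ∀ C ∈ FinFin, B ∩ g ⁻¹' C ∈ I

/-- `I` is a hereditary weak P-ideal. -/
def HWP (I : Set (Set ℕ)) : Prop := ∀ B : Set ℕ, B ∉ I → ¬ FinFinCopyOn I B

/-- `I|B` contains an isomorphic copy of `BI`. -/
def BICopyOn (I : Set (Set ℕ)) (B : Set ℕ) : Prop :=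
  ∃ g : ℕ → ℕ × ℕ × ℕ, Set.BijOn g B Set.univ ∧ ∀ A ∈ BI, B ∩ g ⁻¹' A ∈ I

/-- Finite sets belong to `FinFin`. -/
lemma finfin_of_finite {A : Set (ℕ × ℕ)} (h : A.Finite) : A ∈ FinFin := by
  have hcol : ∀ n : ℕ, ({m : ℕ | (n, m) ∈ A}).Finite := by
    intro n
    have : {m : ℕ | (n, m) ∈ A} = (fun m => (n, m)) ⁻¹' A := rfl
    rw [this]
    exact h.preimage (fun a _ b _ hab => by simpa using hab)
  have : {n : ℕ | ¬ ({m : ℕ | (n, m) ∈ A}).Finite} = ∅ := by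
    ext n; simp [hcol n]
  show Set.Finite _; rw [this]; exact Set.finite_empty

/-- Fibers of a `BI` set form a `FinFin`-like small set of infinite fibers. -/
lemma bi_fibers {A : Set (ℕ × ℕ × ℕ)} (hA : A ∈ BI) :
    {q : ℕ × ℕ | ¬ ({m : ℕ | (q.1, q.2, m) ∈ A}).Finite}.Finite := by
  obtain ⟨k, h1, h2⟩ := hA
  have hsub : {q : ℕ × ℕ | ¬ ({m : ℕ | (q.1, q.2, m) ∈ A}).Finite} ⊆
      ⋃ i ∈ Finset.range k,
        (fun j => (i, j)) '' {j : ℕ | ¬ ({m : ℕ | (j, m) ∈ BIsec i A}).Finite} := by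
    rintro ⟨i, j⟩ hq
    simp only [mem_setOf_eq] at hq
    by_cases hik : i < k
    · refine Set.mem_biUnion (Finset.mem_range.mpr hik) ⟨j, ?_, rfl⟩
      exact hq
    · exfalso
      apply hq
      have hfin := h2 i (by omega)
      have : {m : ℕ | (i, j, m) ∈ A} = (fun m => (j, m)) ⁻¹' (BIsec i A) := rfl
      rw [this]
      exact hfin.preimage (fun a _ b _ hab => by simpa using hab)
  refine Set.Finite.subset ?_ hsub
  refine Set.Finite.biUnion (Finset.range k).finite_toSet (fun i hi => ?_)
  exact (h1 i (by simpa using hi)).image _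

/-- A slab supported on level `i` with `FinFin` section is in `BI`. -/
lemma slab_mem_BI (i : ℕ) {C : Set (ℕ × ℕ)} (hC : C ∈ FinFin) :
    {x : ℕ × ℕ × ℕ | x.1 = i ∧ x.2 ∈ C} ∈ BI := by
  refine ⟨i + 1, ?_, ?_⟩
  · intro j hj
    by_cases hji : j = i
    · subst hji
      have : BIsec j {x : ℕ × ℕ × ℕ | x.1 = j ∧ x.2 ∈ C} = C := by
        ext p; simp [BIsec]
      rw [this]; exact hC
    · have : BIsec j {x : ℕ × ℕ × ℕ | x.1 = i ∧ x.2 ∈ C} = ∅ := by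
        ext p; simp [BIsec, hji]
      rw [this]; exact finfin_of_finite Set.finite_empty
  · intro j hj
    have : BIsec j {x : ℕ × ℕ × ℕ | x.1 = i ∧ x.2 ∈ C} = ∅ := by
      ext p; simp [BIsec]; omega
    rw [this]; exact Set.finite_empty

/-- If all columns of `C` are finite, pulling back along `(i,p) ↦ (i, e p)` lands in `BI`. -/
lemma allfin_mem_BI {C : Set (ℕ × ℕ)} (hC : ∀ n : ℕ, ({m : ℕ | (n, m) ∈ C}).Finite) :
    {x : ℕ × ℕ × ℕ | (x.1, Nat.pairEquiv x.2) ∈ C} ∈ BI := by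
  refine ⟨0, fun i hi => absurd hi (by omega), fun i _ => ?_⟩
  have : BIsec i {x : ℕ × ℕ × ℕ | (x.1, Nat.pairEquiv x.2) ∈ C} =
      (fun p : ℕ × ℕ => Nat.pairEquiv p) ⁻¹' {m : ℕ | (i, m) ∈ C} := rfl
  rw [this]
  exact (hC i).preimage (Nat.pairEquiv.injective.injOn)

/-- Finite unions of ideal sets are in the ideal. -/
lemma biUnion_mem_ideal {I : Set (Set ℕ)} (hI : IsIdeal I) {F : Set ℕ} (hF : F.Finite)
    (f : ℕ → Set ℕ) (hf : ∀ i ∈ F, f i ∈ I) : (⋃ i ∈ F, f i) ∈ I := by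
  refine Set.Finite.induction_on
    (motive := fun s _ => (∀ i ∈ s, f i ∈ I) → (⋃ i ∈ s, f i) ∈ I) F hF ?_ ?_ hf
  · intro _
    simpa using hI.1 ∅ Set.finite_empty
  · intro a s _ _ ih hf'
    rw [Set.biUnion_insert]
    exact hI.2.2.1 _ _ (hf' a (Set.mem_insert a s))
      (ih (fun i hi => hf' i (Set.mem_insert_of_mem a hi)))

theorem stmt_9 (I : Set (Set ℕ)) (hI : IsIdeal I) :
    HWP I ↔ ∀ B : Set ℕ, B ∉ I → ¬ BICopyOn I B := by
  constructor
  · -- HWP → no BI copy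
    intro hHWP B hB ⟨g, hbij, hmem⟩
    by_cases hcase : ∃ i : ℕ, B ∩ g ⁻¹' {x : ℕ × ℕ × ℕ | x.1 = i} ∉ I
    · obtain ⟨i, hBi⟩ := hcase
      refine hHWP _ hBi ⟨fun n => (g n).2, ⟨?_, ?_, ?_⟩, ?_⟩
      · exact mapsTo_univ _ _
      · intro a ha b hb hab
        have h1 : (g a).1 = i := ha.2
        have h2 : (g b).1 = i := hb.2
        have : g a = g b := Prod.ext (h1.trans h2.symm) hab
        exact hbij.injOn ha.1 hb.1 this
      · intro p _
        obtain ⟨n, hn, hgn⟩ := hbij.surjOn (Set.mem_univ (i, p))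
        refine ⟨n, ⟨hn, ?_⟩, ?_⟩
        · show (g n).1 = i; rw [hgn]
        · show (g n).2 = p; rw [hgn]
      · intro C hC
        have key := hmem _ (slab_mem_BI i hC)
        have heq : B ∩ g ⁻¹' {x : ℕ × ℕ × ℕ | x.1 = i} ∩ (fun n => (g n).2) ⁻¹' C =
            B ∩ g ⁻¹' {x : ℕ × ℕ × ℕ | x.1 = i ∧ x.2 ∈ C} := by
          ext n
          simp only [mem_inter_iff, mem_preimage, mem_setOf_eq, and_assoc]
        rw [heq]; exact key
    · push_neg at hcase
      refine hHWP B hB ⟨fun n => ((g n).1, Nat.pairEquiv (g n).2), ?_, ?_⟩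
      · have hJ : Set.BijOn (fun x : ℕ × ℕ × ℕ => (x.1, Nat.pairEquiv x.2))
            Set.univ Set.univ := by
          refine ⟨mapsTo_univ _ _, ?_, ?_⟩
          · intro a _ b _ hab
            simp only [Prod.mk.injEq] at hab
            exact Prod.ext hab.1 (Nat.pairEquiv.injective hab.2)
          · intro q _
            exact ⟨(q.1, Nat.pairEquiv.symm q.2), trivial,
              Prod.ext rfl (Nat.pairEquiv.apply_symm_apply q.2)⟩
        exact hJ.comp hbij
      · intro C hC
        have hF : ({n : ℕ | ¬ ({m : ℕ | (n, m) ∈ C}).Finite}).Finite := hC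
        set F := {n : ℕ | ¬ ({m : ℕ | (n, m) ∈ C}).Finite} with hFdef
        set C₂ : Set (ℕ × ℕ) := {p ∈ C | p.1 ∉ F} with hC2def
        have hC₂cols : ∀ n, ({m : ℕ | (n, m) ∈ C₂}).Finite := by
          intro n
          by_cases hn : n ∈ F
          · have : {m : ℕ | (n, m) ∈ C₂} = ∅ := by
              ext m
              simp only [hC2def, Set.mem_sep_iff, mem_setOf_eq, Set.mem_empty_iff_false,
                iff_false, not_and, not_not]
              intro _
              exact hn
            rw [this]; exact Set.finite_empty
          · have hfin : ({m : ℕ | (n, m) ∈ C}).Finite := not_not.mp hn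
            exact hfin.subset (fun m hm => hm.1)
        have hX : B ∩ g ⁻¹' {x : ℕ × ℕ × ℕ | (x.1, Nat.pairEquiv x.2) ∈ C₂} ∈ I :=
          hmem _ (allfin_mem_BI hC₂cols)
        have hY : (⋃ i ∈ F, B ∩ g ⁻¹' {x : ℕ × ℕ × ℕ | x.1 = i}) ∈ I :=
          biUnion_mem_ideal hI hF _ (fun i _ => hcase i)
        refine hI.2.1 _ _ (hI.2.2.1 _ _ hX hY) ?_
        rintro n ⟨hnB, hnC⟩
        by_cases h1 : (g n).1 ∈ F
        · exact Or.inr (Set.mem_biUnion h1 ⟨hnB, rfl⟩)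
        · exact Or.inl ⟨hnB, ⟨hnC, h1⟩⟩
  · -- no BI copy → HWP
    intro h B hB ⟨g, hbij, hmem⟩
    set H : ℕ × ℕ ≃ ℕ × ℕ × ℕ :=
      (Nat.pairEquiv.symm.prodCongr (Equiv.refl ℕ)).trans (Equiv.prodAssoc ℕ ℕ ℕ) with hHdef
    refine h B hB ⟨fun n => H (g n), ?_, ?_⟩
    · have hH : Set.BijOn (⇑H) Set.univ Set.univ :=
        ⟨mapsTo_univ _ _, H.injective.injOn,
          fun q _ => ⟨H.symm q, trivial, H.apply_symm_apply q⟩⟩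
      exact hH.comp hbij
    · intro A hA
      have hFF : (⇑H) ⁻¹' A ∈ FinFin := by
        have key := bi_fibers hA
        have heq : {n : ℕ | ¬ ({m : ℕ | (n, m) ∈ (⇑H) ⁻¹' A}).Finite} =
            (⇑Nat.pairEquiv.symm) ⁻¹'
              {q : ℕ × ℕ | ¬ ({m : ℕ | (q.1, q.2, m) ∈ A}).Finite} := rfl
        show Set.Finite _
        rw [heq]
        exact key.preimage (Nat.pairEquiv.symm.injective.injOn)
      exact hmem _ hFF
end

section
/- An ideal I on ω contains an isomorphic copy of Fin⊗Fin if and only if FinBW(I) coincides with the class of finite Hausdorff spaces; in particular if Fin⊗Fin ⊑ I then no infinite Hausdorff space is in FinBW(I), and if Fin⊗Fin ⋢ I then the convergent sequence space {0} ∪ {1/(n+1) : n ∈ ω} ⊆ ℝ is an infinite member of FinBW(I). -/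
open Set

/-- A Hausdorff space is *boring* if it is sequentially compact and some finite
set receives the limits of all injective convergent sequences. -/
def Boring (X : Type*) [TopologicalSpace X] : Prop :=
  SeqCompactSpace X ∧ ∃ F : Finset X, ∀ (x : ℕ → X) (l : X),
    Function.Injective x → Filter.Tendsto x Filter.atTop (nhds l) → l ∈ F

/-- The sequence `(x n)_{n ∈ A}` converges to `l`. -/
def ConvAlong {X : Type*} [TopologicalSpace X] (A : Set ℕ) (x : ℕ → X) (l : X) : Prop :=
  ∀ U ∈ nhds l, {n ∈ A | x n ∉ U}.Finite

/-- `X ∈ FinBW(I)`: every sequence converges along some `I`-positive index set. -/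
def FinBW (I : Set (Set ℕ)) (X : Type*) [TopologicalSpace X] : Prop :=
  ∀ x : ℕ → X, ∃ A : Set ℕ, A ∉ I ∧ ∃ l : X, ConvAlong A x l

universe u

section Aux

lemma ideal_biUnion {I : Set (Set ℕ)} (hI : IsIdeal I) {ι : Type*} {s : Set ι}
    (hs : s.Finite) (A : ι → Set ℕ) (h : ∀ i ∈ s, A i ∈ I) : (⋃ i ∈ s, A i) ∈ I := by
  revert h
  apply Set.Finite.induction_on
    (motive := fun s _ => (∀ i ∈ s, A i ∈ I) → (⋃ i ∈ s, A i) ∈ I) s hs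
  · intro _
    simpa using hI.1 ∅ finite_empty
  · intro a s' _ _ ih h
    rw [Set.biUnion_insert]
    exact hI.2.2.1 _ _ (h a (Set.mem_insert _ _))
      (ih fun i hi => h i (Set.mem_insert_of_mem _ hi))

/-- Core combinatorial lemma: if `I` does not contain a copy of `Fin ⊗ Fin`, then for
every partition of `ω` into `I`-sets there is an `I`-positive set meeting every
piece finitely. -/
lemma core_lemma {I : Set (Set ℕ)} (hI : IsIdeal I)
    (hno : ¬ ∃ f : ℕ → ℕ × ℕ, Function.Bijective f ∧ ∀ C ∈ FinFin, f ⁻¹' C ∈ I)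
    (p : ℕ → ℕ) (hp : ∀ k, p ⁻¹' {k} ∈ I) :
    ∃ A, A ∉ I ∧ ∀ k, (A ∩ p ⁻¹' {k}).Finite := by
  classical
  by_contra hcon
  push_neg at hcon
  have key : ∀ A : Set ℕ, (∀ k, (A ∩ p ⁻¹' {k}).Finite) → A ∈ I := by
    intro A hA
    by_contra h
    obtain ⟨k, hk⟩ := hcon A h
    exact hk (hA k)
  set P : ℕ → Set ℕ := fun k => p ⁻¹' {k} with hP
  set Sp : ℕ → Prop := fun k => (P k).Infinite with hSp
  set R : Set ℕ := {n | (P (p n)).Finite} with hRdef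
  have hR : R ∈ I := by
    apply key
    intro k
    by_cases hk : (P k).Finite
    · exact hk.subset inter_subset_right
    · have hempty : R ∩ P k = ∅ := by
        ext n
        simp only [mem_inter_iff, mem_empty_iff_false, iff_false, not_and]
        intro hn hnk
        have hpnk : p n = k := hnk
        exact hk (hpnk ▸ hn)
      rw [hempty]; exact finite_empty
  have hSinf : (setOf Sp).Infinite := by
    by_contra hSfin
    rw [Set.not_infinite] at hSfin
    have hsub : (Set.univ : Set ℕ) ⊆ R ∪ ⋃ k ∈ setOf Sp, P k := by
      intro n _
      by_cases h : (P (p n)).Finite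
      · exact Or.inl h
      · exact Or.inr (Set.mem_biUnion (show Sp (p n) from h) rfl)
    exact hI.2.2.2 (hI.2.1 _ _
      (hI.2.2.1 _ _ hR (ideal_biUnion hI hSfin P fun k _ => hp k)) hsub)
  set σ : ℕ → ℕ := Nat.nth Sp with hσ
  have hσmem : ∀ j, Sp (σ j) := fun j => Nat.nth_mem_of_infinite hSinf j
  set Q : ℕ → Set ℕ := fun j => if j = 0 then P (σ 0) ∪ R else P (σ j) with hQ
  have hPQ : ∀ j, P (σ j) ⊆ Q j := by
    intro j
    rcases eq_or_ne j 0 with rfl | h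
    · rw [hQ]; simp
    · rw [hQ]; simp [h]
  have hQinf : ∀ j, (Q j).Infinite := fun j => Set.Infinite.mono (hPQ j) (hσmem j)
  set c : ℕ → ℕ := fun n => if (P (p n)).Finite then 0 else Nat.count Sp (p n) with hc
  have hmemQ : ∀ n, n ∈ Q (c n) := by
    intro n
    by_cases h : (P (p n)).Finite
    · have hc0 : c n = 0 := by rw [hc]; simp [h]
      rw [hc0, hQ]; simp only [if_pos rfl]
      exact Or.inr h
    · have hsp : Sp (p n) := h
      have hnth : σ (Nat.count Sp (p n)) = p n := Nat.nth_count hsp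
      have hmem : n ∈ P (σ (Nat.count Sp (p n))) := by
        rw [hnth]; exact rfl
      have hcn : c n = Nat.count Sp (p n) := by rw [hc]; simp [h]
      rw [hcn]
      exact hPQ _ hmem
  have hcol : ∀ n j, n ∈ Q j → c n = j := by
    intro n j hn
    rcases eq_or_ne j 0 with rfl | hj
    · rw [hQ] at hn; simp only [if_pos rfl] at hn
      rcases hn with hn | hn
      · have hpn : p n = σ 0 := hn
        have hsp : Sp (p n) := hpn ▸ hσmem 0
        have hnf : ¬ (P (p n)).Finite := hsp
        rw [hc]; simp only [hnf, if_false]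
        rw [hpn]
        exact Nat.count_nth_of_infinite hSinf 0
      · have hfin : (P (p n)).Finite := hn
        rw [hc]; simp [hfin]
    · rw [hQ] at hn; simp only [if_neg hj] at hn
      have hpn : p n = σ j := hn
      have hsp : Sp (p n) := hpn ▸ hσmem j
      have hnf : ¬ (P (p n)).Finite := hsp
      rw [hc]; simp only [hnf, if_false]
      rw [hpn]
      exact Nat.count_nth_of_infinite hSinf j
  have hQI : ∀ j, Q j ∈ I := by
    intro j
    rcases eq_or_ne j 0 with rfl | hj
    · rw [hQ]; simp only [if_pos rfl]
      exact hI.2.2.1 _ _ (hp _) hR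
    · rw [hQ]; simp only [if_neg hj]
      exact hp _
  set f : ℕ → ℕ × ℕ := fun n => (c n, Nat.count (· ∈ Q (c n)) n) with hf
  have hinj : Function.Injective f := by
    intro n n' h
    rw [hf] at h
    simp only [Prod.mk.injEq] at h
    obtain ⟨h1, h2⟩ := h
    rw [h1] at h2
    calc n = Nat.nth (· ∈ Q (c n)) (Nat.count (· ∈ Q (c n)) n) := (Nat.nth_count (hmemQ n)).symm
    _ = Nat.nth (· ∈ Q (c n')) (Nat.count (· ∈ Q (c n')) n') := by rw [h1, h2]
    _ = n' := Nat.nth_count (hmemQ n')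
  have hsurj : Function.Surjective f := by
    rintro ⟨j, m⟩
    have hinfQ : (setOf (· ∈ Q j)).Infinite := hQinf j
    refine ⟨Nat.nth (· ∈ Q j) m, ?_⟩
    have hmem : Nat.nth (· ∈ Q j) m ∈ Q j := Nat.nth_mem_of_infinite hinfQ m
    have hcj : c (Nat.nth (· ∈ Q j) m) = j := hcol _ _ hmem
    rw [hf]
    simp only [hcj]
    rw [Nat.count_nth_of_infinite hinfQ m]
  have hpre : ∀ C ∈ FinFin, f ⁻¹' C ∈ I := by
    intro C hC
    have hT : {j | ¬ ({m | (j, m) ∈ C}).Finite}.Finite := hC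
    set T := {j | ¬ ({m | (j, m) ∈ C}).Finite} with hTdef
    have hU : (⋃ j ∈ T, Q j) ∈ I := ideal_biUnion hI hT Q fun j _ => hQI j
    have hD : (f ⁻¹' C \ ⋃ j ∈ T, Q j) ∈ I := by
      apply key
      intro k
      by_cases hk : (P k).Finite
      · exact hk.subset fun n hn => hn.2
      · have hsp : Sp k := hk
        have hσk : σ (Nat.count Sp k) = k := Nat.nth_count hsp
        set j := Nat.count Sp k with hj
        have hPk : P k ⊆ Q j := by rw [← hσk]; exact hPQ j
        by_cases hjT : j ∈ T
        · have hempty : (f ⁻¹' C \ ⋃ i ∈ T, Q i) ∩ P k = ∅ := by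
            ext n
            simp only [mem_inter_iff, mem_diff, mem_empty_iff_false, iff_false, not_and]
            rintro ⟨_, hnU⟩ hnk
            exact hnU (Set.mem_biUnion hjT (hPk hnk))
          rw [hempty]; exact finite_empty
        · have hsec : ({m | (j, m) ∈ C}).Finite := not_not.mp hjT
          apply Set.Finite.subset (hsec.image (Nat.nth (· ∈ Q j)))
          rintro n ⟨⟨hnC, _⟩, hnk⟩
          have hnQ : n ∈ Q j := hPk hnk
          have hcn : c n = j := hcol n j hnQ
          have hfn : f n = (j, Nat.count (· ∈ Q j) n) := by
            rw [hf]; simp only [hcn]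
          refine ⟨Nat.count (· ∈ Q j) n, ?_, Nat.nth_count hnQ⟩
          show (j, Nat.count (· ∈ Q j) n) ∈ C
          rw [← hfn]
          exact hnC
    have hsub : f ⁻¹' C ⊆ (⋃ j ∈ T, Q j) ∪ (f ⁻¹' C \ ⋃ j ∈ T, Q j) := by
      intro n hn
      by_cases h : n ∈ ⋃ j ∈ T, Q j
      · exact Or.inl h
      · exact Or.inr ⟨hn, h⟩
    exact hI.2.1 _ _ (hI.2.2.1 _ _ hU hD) hsub
  exact hno ⟨f, ⟨hinj, hsurj⟩, hpre⟩

lemma oneDiv_inj : Function.Injective (fun n : ℕ => 1 / ((n : ℝ) + 1)) := by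
  intro a b h
  simp only at h
  have ha : ((a : ℝ) + 1) ≠ 0 := by positivity
  have hb : ((b : ℝ) + 1) ≠ 0 := by positivity
  field_simp at h
  exact_mod_cast (by linarith : (a : ℝ) = b)

lemma seqK_infinite : (insert (0 : ℝ) (Set.range fun n : ℕ => 1 / ((n : ℝ) + 1))).Infinite :=
  Set.Infinite.mono (Set.subset_insert _ _) (Set.infinite_range_of_injective oneDiv_inj)

lemma finBW_K {I : Set (Set ℕ)} (hI : IsIdeal I)
    (hno : ¬ ∃ f : ℕ → ℕ × ℕ, Function.Bijective f ∧ ∀ C ∈ FinFin, f ⁻¹' C ∈ I) :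
    FinBW I ↥(insert (0 : ℝ) (Set.range fun n : ℕ => 1 / ((n : ℝ) + 1))) := by
  classical
  set K := insert (0 : ℝ) (Set.range fun n : ℕ => 1 / ((n : ℝ) + 1)) with hK
  intro x
  by_cases hfib : ∃ w, x ⁻¹' {w} ∉ I
  · obtain ⟨w, hw⟩ := hfib
    refine ⟨x ⁻¹' {w}, hw, w, ?_⟩
    intro U hU
    have hempty : {n ∈ x ⁻¹' {w} | x n ∉ U} = ∅ := by
      ext n
      simp only [sep_setOf, mem_setOf_eq, mem_empty_iff_false, iff_false, not_and]
      intro hn hnU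
      exact hnU (hn ▸ mem_of_mem_nhds hU)
    rw [hempty]; exact finite_empty
  · push_neg at hfib
    set q : ℕ → ℕ :=
      fun n => if h : ∃ k : ℕ, (x n : ℝ) = 1 / ((k : ℝ) + 1) then h.choose + 1 else 0 with hq
    have hqfib : ∀ j, q ⁻¹' {j} ∈ I := by
      intro j
      match j with
      | 0 =>
        apply hI.2.1 _ _ (hfib ⟨0, Set.mem_insert _ _⟩)
        intro n hn
        have hn0 : q n = 0 := hn
        by_cases h : ∃ k : ℕ, (x n : ℝ) = 1 / ((k : ℝ) + 1)
        · rw [hq] at hn0; simp only [dif_pos h] at hn0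
          exact absurd hn0 (Nat.succ_ne_zero _)
        · have hx : (x n : ℝ) = 0 := by
            rcases (x n).2 with h0 | ⟨k, hk⟩
            · exact h0
            · exact absurd ⟨k, hk.symm⟩ h
          show x n ∈ ({⟨0, Set.mem_insert _ _⟩} : Set K)
          simp only [mem_singleton_iff]
          exact Subtype.ext hx
      | (j + 1) =>
        have hmemK : (1 / ((j : ℝ) + 1)) ∈ K := Set.mem_insert_of_mem _ ⟨j, rfl⟩
        apply hI.2.1 _ _ (hfib ⟨1 / ((j : ℝ) + 1), hmemK⟩)
        intro n hn
        have hn0 : q n = j + 1 := hn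
        by_cases h : ∃ k : ℕ, (x n : ℝ) = 1 / ((k : ℝ) + 1)
        · rw [hq] at hn0
          simp only [dif_pos h, Nat.add_right_cancel_iff] at hn0
          have hspec := h.choose_spec
          rw [hn0] at hspec
          show x n ∈ ({⟨1 / ((j : ℝ) + 1), hmemK⟩} : Set K)
          simp only [mem_singleton_iff]
          exact Subtype.ext hspec
        · rw [hq] at hn0; simp only [dif_neg h] at hn0
          exact absurd hn0.symm (Nat.succ_ne_zero _)
    obtain ⟨A, hA, hAfin⟩ := core_lemma hI hno q hqfib
    refine ⟨A, hA, ⟨0, Set.mem_insert _ _⟩, ?_⟩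
    intro U hU
    obtain ⟨V, hV, hVU⟩ := (mem_nhds_subtype K _ U).mp hU
    obtain ⟨ε, hε, hball⟩ := Metric.mem_nhds_iff.mp hV
    obtain ⟨N, hN⟩ := exists_nat_one_div_lt (K := ℝ) hε
    apply Set.Finite.subset (Set.Finite.biUnion (Set.finite_Iio (N + 2)) fun j _ => hAfin j)
    rintro n ⟨hnA, hnU⟩
    have hvV : (x n : ℝ) ∉ V := fun hv => hnU (hVU hv)
    have hvb : (x n : ℝ) ∉ Metric.ball (0 : ℝ) ε := fun hv => hvV (hball hv)
    have hvne : (x n : ℝ) ≠ 0 := by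
      intro h0
      apply hvb
      rw [h0]
      exact Metric.mem_ball_self hε
    have hex : ∃ k : ℕ, (x n : ℝ) = 1 / ((k : ℝ) + 1) := by
      rcases (x n).2 with h0 | ⟨k, hk⟩
      · exact absurd h0 hvne
      · exact ⟨k, hk.symm⟩
    have hqn : q n = hex.choose + 1 := by rw [hq]; simp only [dif_pos hex]
    have hspec := hex.choose_spec
    have hdist : ε ≤ (x n : ℝ) := by
      have h1 : ε ≤ dist (x n : ℝ) 0 := not_lt.mp fun h => hvb (Metric.mem_ball.mpr h)
      rw [Real.dist_eq, sub_zero] at h1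
      calc ε ≤ |(x n : ℝ)| := h1
      _ = (x n : ℝ) := abs_of_pos (by rw [hspec]; positivity)
    have hlt : hex.choose < N := by
      by_contra hge
      push_neg at hge
      have hcast : (N : ℝ) ≤ (hex.choose : ℝ) := by exact_mod_cast hge
      have h1 : (1 : ℝ) / ((hex.choose : ℝ) + 1) ≤ 1 / ((N : ℝ) + 1) := by
        apply one_div_le_one_div_of_le (by positivity)
        linarith
      rw [hspec] at hdist
      linarith
    refine Set.mem_biUnion (show q n ∈ Set.Iio (N + 2) from ?_) ?_
    · rw [hqn]; exact Nat.lt_succ_of_lt (Nat.succ_lt_succ hlt)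
    · exact ⟨hnA, rfl⟩

lemma partC {I : Set (Set ℕ)} (hI : IsIdeal I)
    (hno : ¬ ∃ f : ℕ → ℕ × ℕ, Function.Bijective f ∧ ∀ C ∈ FinFin, f ⁻¹' C ∈ I) :
    Infinite ↥(insert (0 : ℝ) (Set.range fun n : ℕ => 1 / ((n : ℝ) + 1))) ∧
    FinBW I ↥(insert (0 : ℝ) (Set.range fun n : ℕ => 1 / ((n : ℝ) + 1))) :=
  ⟨seqK_infinite.to_subtype, finBW_K hI hno⟩

lemma partB {I : Set (Set ℕ)} (hI : IsIdeal I)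
    (hf : ∃ f : ℕ → ℕ × ℕ, Function.Bijective f ∧ ∀ C ∈ FinFin, f ⁻¹' C ∈ I)
    (X : Type u) [TopologicalSpace X] [T2Space X] (hBW : FinBW I X) : Finite X := by
  obtain ⟨f, hfb, hfI⟩ := hf
  by_contra hfin
  rw [not_finite_iff_infinite] at hfin
  let z := Infinite.natEmbedding X
  obtain ⟨A, hA, l, hconv⟩ := hBW fun n => z (f n).1
  have hB : f '' A ∉ FinFin := by
    intro h
    have h2 := hfI _ h
    rw [Set.preimage_image_eq A hfb.injective] at h2
    exact hA h2
  have hBinf : {c | ¬ ({m | (c, m) ∈ f '' A}).Finite}.Infinite := hB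
  have hlim : ∀ c, ¬ ({m | (c, m) ∈ f '' A}).Finite → z c = l := by
    intro c hc
    by_contra hne
    have hU : ({z c}ᶜ : Set X) ∈ nhds l := by
      apply IsOpen.mem_nhds isOpen_compl_singleton
      simp only [mem_compl_iff, mem_singleton_iff]
      exact fun h => hne h.symm
    have hfinite := hconv _ hU
    have him : ((fun m => ((c, m) : ℕ × ℕ)) '' {m | (c, m) ∈ f '' A}).Infinite :=
      Set.Infinite.image (fun a _ b _ hab => by simpa using hab) hc
    have hcol_inf : (({c} ×ˢ (Set.univ : Set ℕ)) ∩ f '' A).Infinite := by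
      apply Set.Infinite.mono ?_ him
      rintro p ⟨m, hm, rfl⟩
      exact ⟨⟨rfl, trivial⟩, hm⟩
    have hSinf : (f ⁻¹' (({c} ×ˢ (Set.univ : Set ℕ)) ∩ f '' A)).Infinite :=
      hcol_inf.preimage (by rw [hfb.surjective.range_eq]; exact Set.subset_univ _)
    apply hSinf
    apply hfinite.subset
    rintro n ⟨⟨hc1, _⟩, hfA⟩
    obtain ⟨a, haA, hfa⟩ := hfA
    have hna : a = n := hfb.injective hfa
    subst hna
    refine ⟨haA, ?_⟩
    have hc1' : (f a).1 = c := hc1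
    simp only [mem_compl_iff, mem_singleton_iff, not_not]
    rw [hc1']
  obtain ⟨c₁, hc₁⟩ := hBinf.nonempty
  obtain ⟨c₂, hc₂⟩ := (hBinf.diff (Set.finite_singleton c₁)).nonempty
  have e1 := hlim c₁ hc₁
  have e2 := hlim c₂ hc₂.1
  exact hc₂.2 (by simpa using z.injective (e2.trans e1.symm))

lemma finite_finBW {I : Set (Set ℕ)} (hI : IsIdeal I) (X : Type u) [TopologicalSpace X]
    (hX : Finite X) : FinBW I X := by
  intro x
  by_cases h : ∃ v, x ⁻¹' {v} ∉ I
  · obtain ⟨v, hv⟩ := h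
    refine ⟨x ⁻¹' {v}, hv, v, ?_⟩
    intro U hU
    have hempty : {n ∈ x ⁻¹' {v} | x n ∉ U} = ∅ := by
      ext n
      simp only [sep_setOf, mem_setOf_eq, mem_empty_iff_false, iff_false, not_and]
      intro hn hnU
      exact hnU (hn ▸ mem_of_mem_nhds hU)
    rw [hempty]; exact finite_empty
  · push_neg at h
    exfalso
    have hcov : (Set.univ : Set ℕ) ⊆ ⋃ v ∈ Set.range x, x ⁻¹' {v} := by
      intro n _
      exact Set.mem_biUnion (Set.mem_range_self n) rfl
    exact hI.2.2.2 (hI.2.1 _ _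
      (ideal_biUnion hI (haveI := hX; Set.finite_univ.subset (Set.subset_univ (Set.range x)))
        _ fun v _ => h v) hcov)

lemma finBW_homeo {I : Set (Set ℕ)} {X : Type*} {Y : Type*} [TopologicalSpace X]
    [TopologicalSpace Y] (e : X ≃ₜ Y) (h : FinBW I X) : FinBW I Y := by
  intro y
  obtain ⟨A, hA, l, hconv⟩ := h fun n => e.symm (y n)
  refine ⟨A, hA, e l, ?_⟩
  intro U hU
  have hU' : e ⁻¹' U ∈ nhds l := e.continuous.continuousAt.preimage_mem_nhds (by simpa using hU)
  have heq : {n ∈ A | y n ∉ U} = {n ∈ A | e.symm (y n) ∉ e ⁻¹' U} := by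
    ext n
    simp [Set.mem_preimage]
  rw [heq]
  exact hconv _ hU'

end Aux

theorem stmt_18 (I : Set (Set ℕ)) (hI : IsIdeal I) :
    ((∃ f : ℕ → ℕ × ℕ, Function.Bijective f ∧ ∀ C ∈ FinFin, f ⁻¹' C ∈ I) ↔
      ∀ (X : Type u) [TopologicalSpace X] [T2Space X], (FinBW I X ↔ Finite X)) ∧
    ((∃ f : ℕ → ℕ × ℕ, Function.Bijective f ∧ ∀ C ∈ FinFin, f ⁻¹' C ∈ I) →
      ∀ (X : Type u) [TopologicalSpace X] [T2Space X], FinBW I X → Finite X) ∧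
    ((¬ ∃ f : ℕ → ℕ × ℕ, Function.Bijective f ∧ ∀ C ∈ FinFin, f ⁻¹' C ∈ I) →
      Infinite ↥(insert (0 : ℝ) (Set.range fun n : ℕ => 1 / ((n : ℝ) + 1))) ∧
      FinBW I ↥(insert (0 : ℝ) (Set.range fun n : ℕ => 1 / ((n : ℝ) + 1)))) := by
  refine ⟨⟨fun hf X _ _ => ⟨partB hI hf X, fun h => finite_finBW hI X h⟩, ?_⟩,
    fun hf X _ _ => partB hI hf X, fun hno => partC hI hno⟩
  intro hall
  by_contra hno
  obtain ⟨hKinf, hKBW⟩ := partC hI hno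
  letI : T2Space (ULift.{u} ↥(insert (0 : ℝ) (Set.range fun n : ℕ => 1 / ((n : ℝ) + 1)))) :=
    Homeomorph.ulift.isEmbedding.t2Space
  have h1 : FinBW I (ULift.{u} ↥(insert (0 : ℝ) (Set.range fun n : ℕ => 1 / ((n : ℝ) + 1)))) :=
    finBW_homeo Homeomorph.ulift.symm hKBW
  have h2 := (hall _).mp h1
  haveI := hKinf
  haveI := h2
  exact not_finite
    (ULift.{u} ↥(insert (0 : ℝ) (Set.range fun n : ℕ => 1 / ((n : ℝ) + 1))))
end
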